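/- Let Y ⊆ ℝ^m be the reachable objective space with nonempty Pareto front Y*, and assume every element of Y* has all coordinates nonnegative (the ideal point is the zero vector). Let w ∈ ℝ^m have strictly positive entries and define g_w on objective vectors by g_w(y) = max_{1 ≤ j ≤ m} w_j |y_j|. Let y¹, ..., y^N ∈ Y be finitely many sampled objective vectors, let A be the set of sampled vectors not Pareto-dominated by any other sample, and suppose the best sample satisfies min_{1 ≤ i ≤ N} g_w(y^i) ≤ inf_{y ∈ Y} g_w(y) + δ for some δ ≥ 0. Then I¹_{ε+}(A) ≤ (max_{1 ≤ j ≤ m} 1/w_j) · (inf_{y ∈ Y} g_w(y) + δ). -/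

import Mathlib

open Finset

/-- Pareto dominance for objective vectors (to be minimized): `y₁ ≺ y₂`. -/
def Dominates {m : ℕ} (y₁ y₂ : Fin m → ℝ) : Prop :=
  (∀ j, y₁ j ≤ y₂ j) ∧ ∃ k, y₁ k < y₂ k

/-- The Pareto front of a set of objective vectors: its nondominated elements. -/
def ParetoFront {m : ℕ} (Y : Set (Fin m → ℝ)) : Set (Fin m → ℝ) :=
  {y ∈ Y | ¬ ∃ z ∈ Y, Dominates z y}

/-- The unary additive ε-indicator of `A` relative to the (Pareto front) set `Ystar`:
`inf {ε | ∀ y₂ ∈ Ystar, ∃ y₁ ∈ A, ∀ j, y₁ j ≤ ε + y₂ j}`. -/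
noncomputable def epsIndicator {m : ℕ} (A Ystar : Set (Fin m → ℝ)) : ℝ :=
  sInf {ε : ℝ | ∀ y₂ ∈ Ystar, ∃ y₁ ∈ A, ∀ j, y₁ j ≤ ε + y₂ j}

/-- With `Y ⊆ ℝ^m` having a nonempty Pareto front of nonnegative vectors
(ideal point `0`), `w` strictly positive, `g_w(y) = max_j (w j * |y j|)`, samples
`y¹, …, y^N ∈ Y`, `A` the nondominated samples, and the best sample δ-optimal for `g_w`
(`min_i g_w (y i) ≤ inf_{y ∈ Y} g_w y + δ`, `δ ≥ 0`), we have
`I¹_{ε+}(A) ≤ (max_j 1 / w j) * (inf_{y ∈ Y} g_w y + δ)`. -/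
theorem eps_indicator_le_of_near_optimal_sample
    (m N : ℕ) [NeZero m] [NeZero N]
    (Y : Set (Fin m → ℝ))
    (hPFne : (ParetoFront Y).Nonempty)
    (hideal : ∀ y ∈ ParetoFront Y, ∀ j, 0 ≤ y j)
    (w : Fin m → ℝ) (hw : ∀ j, 0 < w j)
    (y : Fin N → Fin m → ℝ) (hy : ∀ i, y i ∈ Y)
    (δ : ℝ) (hδ : 0 ≤ δ)
    (hbest : (univ.inf' univ_nonempty fun i =>
        univ.sup' univ_nonempty fun j => w j * |y i j|) ≤
      sInf ((fun v => univ.sup' univ_nonempty fun j => w j * |v j|) '' Y) + δ) :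
    epsIndicator {v | ∃ i, v = y i ∧ ∀ k, k ≠ i → ¬ Dominates (y k) (y i)}
        (ParetoFront Y) ≤
      (univ.sup' univ_nonempty fun j => 1 / w j) *
        (sInf ((fun v => univ.sup' univ_nonempty fun j => w j * |v j|) '' Y) + δ) := by
  set g : (Fin m → ℝ) → ℝ := fun v => univ.sup' univ_nonempty fun j => w j * |v j| with hg
  set c : ℝ := sInf (g '' Y) + δ with hcdef
  set M : ℝ := univ.sup' univ_nonempty fun j => 1 / w j with hMdef
  obtain ⟨j₀, -⟩ := (univ_nonempty : (univ : Finset (Fin m)).Nonempty)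
  have hgnonneg : ∀ v, 0 ≤ g v := fun v =>
    le_trans (mul_nonneg (hw j₀).le (abs_nonneg _))
      (Finset.le_sup' (fun j => w j * |v j|) (mem_univ j₀))
  have hc0 : 0 ≤ c := by
    have h1 : 0 ≤ sInf (g '' Y) := Real.sInf_nonneg (by rintro x ⟨v, -, rfl⟩; exact hgnonneg v)
    linarith
  have hM0 : 0 ≤ M :=
    le_trans (le_of_lt (div_pos one_pos (hw j₀)))
      (Finset.le_sup' (fun j => 1 / w j) (mem_univ j₀))
  have hdom : ∀ a b : Fin m → ℝ, Dominates a b ↔ a < b := by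
    intro a b
    simp [Dominates, Pi.lt_def, Pi.le_def]
  obtain ⟨i₀, -, hi₀⟩ := Finset.exists_mem_eq_inf' (univ_nonempty) (fun i => g (y i))
  have gle : g (y i₀) ≤ c := by rw [← hi₀]; exact hbest
  have hb : ∀ j, y i₀ j ≤ M * c := by
    intro j
    have h1 : w j * |y i₀ j| ≤ c :=
      le_trans (Finset.le_sup' (fun j => w j * |y i₀ j|) (mem_univ j)) gle
    have h2 : y i₀ j ≤ |y i₀ j| := le_abs_self _
    have h3 : (1 / w j) * c ≤ M * c :=
      mul_le_mul_of_nonneg_right (Finset.le_sup' (fun j => 1 / w j) (mem_univ j)) hc0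
    have h4 : y i₀ j ≤ (1 / w j) * c := by
      rw [div_mul_eq_mul_div, one_mul, le_div_iff₀ (hw j)]
      nlinarith [abs_nonneg (y i₀ j), (hw j)]
    exact h4.trans h3
  have hmem : (M * c) ∈ {ε : ℝ | ∀ y₂ ∈ ParetoFront Y,
      ∃ y₁ ∈ {v | ∃ i, v = y i ∧ ∀ k, k ≠ i → ¬ Dominates (y k) (y i)},
        ∀ j, y₁ j ≤ ε + y₂ j} := by
    classical
    intro y₂ hy₂
    obtain ⟨v, hvT, hvmin⟩ : ∃ v ∈ (univ.filter (fun k => y k ≤ y i₀)).image y,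
        ∀ x ∈ (univ.filter (fun k => y k ≤ y i₀)).image y, ¬ x < v := by
      obtain ⟨v, hv⟩ := Finset.exists_minimal (s := (univ.filter (fun k => y k ≤ y i₀)).image y)
        ⟨y i₀, Finset.mem_image.2 ⟨i₀, Finset.mem_filter.2 ⟨mem_univ _, le_refl _⟩, rfl⟩⟩
      exact ⟨v, hv.1, fun x hx hlt => hlt.not_ge (hv.2 hx hlt.le)⟩
    obtain ⟨k, hk, hvk⟩ := Finset.mem_image.1 hvT
    have hkle : y k ≤ y i₀ := (Finset.mem_filter.1 hk).2
    refine ⟨y k, ⟨k, rfl, ?_⟩, ?_⟩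
    · intro k' _ hd
      rw [hdom] at hd
      have hk'le : y k' ≤ y i₀ := le_trans hd.le hkle
      have : y k' ∈ (univ.filter (fun k => y k ≤ y i₀)).image y :=
        Finset.mem_image.2 ⟨k', Finset.mem_filter.2 ⟨mem_univ _, hk'le⟩, rfl⟩
      exact hvmin (y k') this (hvk ▸ hd)
    · intro j
      have := hideal y₂ hy₂ j
      have := hkle j
      have := hb j
      linarith
  by_cases hbb : BddBelow {ε : ℝ | ∀ y₂ ∈ ParetoFront Y,
      ∃ y₁ ∈ {v | ∃ i, v = y i ∧ ∀ k, k ≠ i → ¬ Dominates (y k) (y i)},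
        ∀ j, y₁ j ≤ ε + y₂ j}
  · exact csInf_le hbb hmem
  · rw [epsIndicator, Real.sInf_of_not_bddBelow hbb]
    exact mul_nonneg hM0 hc0
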